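/- Let f : Δ_n → ℝ be permutation-invariant and convex, and define F : Dens(n) → ℝ by F(ρ) = f(λ(ρ)). Then for any λ ∈ Δ_n, any d ∈ ℝⁿ, and any n×n unitary matrix U: d is a subgradient of f at λ relative to Δ_n (i.e., f(λ') ≥ f(λ) + ⟨d, λ' − λ⟩ for all λ' ∈ Δ_n) if and only if U Diag(d) U* is a subgradient of F at U Diag(λ) U* relative to Dens(n) (i.e., F(τ) ≥ F(U Diag(λ) U*) + ⟨U Diag(d) U*, τ − U Diag(λ) U*⟩ for all τ ∈ Dens(n)). -/

import Mathlib

open Matrix BigOperators ComplexOrder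

noncomputable section

/-- The space of `n × n` complex matrices. -/
abbrev Mat (n : ℕ) := Matrix (Fin n) (Fin n) ℂ

/-- The set of density matrices on ℂⁿ: positive semidefinite with trace 1. -/
def Dens (n : ℕ) : Set (Mat n) := {ρ | ρ.PosSemidef ∧ ρ.trace = 1}

/-- Real inner product on (Hermitian) matrices: ⟨A,B⟩ = Tr(AB) (real part). -/
def hip {n : ℕ} (A B : Mat n) : ℝ := ((A * B).trace).re

/-- A POVM with finite outcome set `Y`. -/
def IsPOVM {n : ℕ} {Y : Type*} [Fintype Y] (μ : Y → Mat n) : Prop :=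
  (∀ y, (μ y).PosSemidef) ∧ ∑ y, μ y = 1

/-- A projection-valued measurement. -/
def IsPVM {n : ℕ} {Y : Type*} [Fintype Y] (μ : Y → Mat n) : Prop :=
  IsPOVM μ ∧ (∀ y, (μ y).IsHermitian ∧ μ y * μ y = μ y) ∧
    ∀ y y', y ≠ y' → μ y * μ y' = 0

/-- Expected score of a quantum score with report type `R`. -/
def expScoreR {n : ℕ} {R : Type*} {Y : Type*} [Fintype Y]
    (s : R → Y → ℝ) (μ : R → Y → Mat n) (r : R) (ρ : Mat n) : ℝ :=
  ∑ y, hip (μ r y) ρ * s r y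

/-- Truthfulness of a quantum score. -/
def Truthful {n : ℕ} {Y : Type*} [Fintype Y]
    (s : Mat n → Y → ℝ) (μ : Mat n → Y → Mat n) : Prop :=
  ∀ ρ ∈ Dens n, ∀ ρ' ∈ Dens n, expScoreR s μ ρ' ρ ≤ expScoreR s μ ρ ρ

/-- Strict truthfulness of a quantum score. -/
def StrictlyTruthful {n : ℕ} {Y : Type*} [Fintype Y]
    (s : Mat n → Y → ℝ) (μ : Mat n → Y → Mat n) : Prop :=
  Truthful s μ ∧ ∀ ρ ∈ Dens n, ∀ ρ' ∈ Dens n,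
    expScoreR s μ ρ' ρ = expScoreR s μ ρ ρ → ρ' = ρ

/-- `d` is a (Hermitian-matrix) subgradient of `F` at `ρ` relative to `Dens n`. -/
def IsQSubgrad {n : ℕ} (F : Mat n → ℝ) (ρ d : Mat n) : Prop :=
  ∀ τ ∈ Dens n, F ρ + hip d (τ - ρ) ≤ F τ

/-- `d` is a subgradient of `f` at `p` relative to `P ⊆ ℝ^Y`. -/
def IsCSubgrad {Y : Type*} [Fintype Y] (P : Set (Y → ℝ)) (f : (Y → ℝ) → ℝ)
    (p d : Y → ℝ) : Prop :=
  ∀ q ∈ P, f p + ∑ y, d y * (q y - p y) ≤ f q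

/-- A POVM is tomographically complete if the real span of its elements is
the set of Hermitian matrices. -/
def TomoComplete {n : ℕ} {Y : Type*} [Fintype Y] (μ : Y → Mat n) : Prop :=
  ∀ X : Mat n, X.IsHermitian ↔ X ∈ Submodule.span ℝ (Set.range μ)

/-- The eigenvalues of a Hermitian matrix, in non-increasing order
(junk value `0` on non-Hermitian matrices). -/
def eigs {n : ℕ} (ρ : Mat n) : Fin n → ℝ :=
  if h : ρ.IsHermitian then
    fun i => (h.eigenvalues ∘ (Tuple.sort h.eigenvalues)) i.rev
  else 0

/-- The outer product `v v*`. -/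
def outer {n : ℕ} (v : Fin n → ℂ) : Mat n := Matrix.vecMulVec v (star v)

/-- A family of orthonormal vectors in ℂⁿ. -/
def ONFam {n k : ℕ} (x : Fin k → Fin n → ℂ) : Prop :=
  ∀ i j, ∑ m, (starRingEnd ℂ) (x i m) * x j m = if i = j then 1 else 0

/-- `x` is a spectral decomposition of `ρ` (with eigenvalues in non-increasing
order `eigs ρ`). -/
def IsSpecDecomp {n : ℕ} (ρ : Mat n) (x : Fin n → Fin n → ℂ) : Prop :=
  ONFam x ∧ ρ = ∑ y, (eigs ρ y : ℂ) • outer (x y)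

/-- Expected classical score `ŝ(q; p)`. -/
def cExp {n : ℕ} (s : (Fin n → ℝ) → Fin n → ℝ) (q p : Fin n → ℝ) : ℝ :=
  ∑ y, p y * s q y

/-- Properness of a classical scoring rule. -/
def Proper {n : ℕ} (s : (Fin n → ℝ) → Fin n → ℝ) : Prop :=
  ∀ p ∈ stdSimplex ℝ (Fin n), ∀ q ∈ stdSimplex ℝ (Fin n), cExp s q p ≤ cExp s p p

/-- Strict properness of a classical scoring rule. -/
def StrictlyProper {n : ℕ} (s : (Fin n → ℝ) → Fin n → ℝ) : Prop :=
  Proper s ∧ ∀ p ∈ stdSimplex ℝ (Fin n), ∀ q ∈ stdSimplex ℝ (Fin n),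
    cExp s q p = cExp s p p → q = p

/-- Permutation invariance of a classical scoring rule: `ŝ(p, y) = ŝ(πp, π y)`
where `(πp)_y = p_{π y}`. -/
def PermInv {n : ℕ} (s : (Fin n → ℝ) → Fin n → ℝ) : Prop :=
  ∀ (π : Equiv.Perm (Fin n)) (p : Fin n → ℝ) (y : Fin n), s p y = s (p ∘ π) (π y)

/-- Expected spectral score `S[ŝ](ρ'; ρ)` computed using the spectral
decomposition `x` of the report `ρ'`. -/
def specExp {n : ℕ} (s : (Fin n → ℝ) → Fin n → ℝ) (x : Fin n → Fin n → ℂ)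
    (ρ' ρ : Mat n) : ℝ :=
  ∑ y, hip (outer (x y)) ρ * s (eigs ρ') y

/-- Truthfulness of the spectral score `S[ŝ]`. -/
def SpecTruthful {n : ℕ} (s : (Fin n → ℝ) → Fin n → ℝ) : Prop :=
  ∀ ρ ∈ Dens n, ∀ ρ' ∈ Dens n, ∀ x z, IsSpecDecomp ρ' x → IsSpecDecomp ρ z →
    specExp s x ρ' ρ ≤ specExp s z ρ ρ

/-- Strict truthfulness of the spectral score `S[ŝ]`. -/
def SpecStrictlyTruthful {n : ℕ} (s : (Fin n → ℝ) → Fin n → ℝ) : Prop :=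
  SpecTruthful s ∧ ∀ ρ ∈ Dens n, ∀ ρ' ∈ Dens n, ∀ x z,
    IsSpecDecomp ρ' x → IsSpecDecomp ρ z →
    specExp s x ρ' ρ = specExp s z ρ ρ → ρ' = ρ

/-- Elicitability of a property of density matrices by a quantum score. -/
def ElicitableProp {n : ℕ} {R : Type*} (Γ : Mat n → R) : Prop :=
  ∃ (m : ℕ) (s : R → Fin m → ℝ) (μ : R → Fin m → Mat n),
    (∀ r, IsPOVM (μ r)) ∧
    ∀ ρ ∈ Dens n, ∀ r, (∀ r', expScoreR s μ r' ρ ≤ expScoreR s μ r ρ) ↔ r = Γ ρ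

/-- Identifiability of an ℝᵏ-valued property of density matrices. -/
def IdentifiableProp {n k : ℕ} (Γ : Mat n → (Fin k → ℝ)) : Prop :=
  ∃ V : (Fin k → ℝ) → Fin k → Mat n,
    ∀ r ∈ Γ '' (Dens n), (∀ i, (V r i).IsHermitian) ∧
      ∀ ρ ∈ Dens n, (Γ ρ = r ↔ ∀ i, hip (V r i) ρ = 0)

/-- `Γ` is `k`-elicitable. -/
def KElicitable {n : ℕ} {R : Type*} (k : ℕ) (Γ : Mat n → R) : Prop :=
  ∃ (Γh : Mat n → (Fin k → ℝ)) (ψ : (Fin k → ℝ) → R),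
    ElicitableProp Γh ∧ IdentifiableProp Γh ∧ ∀ ρ ∈ Dens n, Γ ρ = ψ (Γh ρ)

end


noncomputable section SpectralSubgradHelpers

open Matrix BigOperators ComplexOrder Finset

namespace SpectralSubgrad

variable {n : ℕ} {U Q W : Mat n}

lemma herm_diag (v : Fin n → ℝ) : (Matrix.diagonal (fun i => (v i : ℂ))).IsHermitian :=
  Matrix.isHermitian_diagonal_iff.mpr fun i => Complex.conj_ofReal _

lemma herm_conj {A : Mat n} (hA : A.IsHermitian) : (U * A * Uᴴ).IsHermitian := by
  unfold Matrix.IsHermitian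
  simp only [Matrix.conjTranspose_mul, Matrix.conjTranspose_conjTranspose, hA.eq,
    Matrix.mul_assoc]

lemma unit_mul (hU : U ∈ Matrix.unitaryGroup (Fin n) ℂ) : U * Uᴴ = 1 := by
  simpa [Matrix.star_eq_conjTranspose] using Matrix.mem_unitaryGroup_iff.mp hU

lemma unit_mul' (hU : U ∈ Matrix.unitaryGroup (Fin n) ℂ) : Uᴴ * U = 1 := by
  simpa [Matrix.star_eq_conjTranspose] using Matrix.mem_unitaryGroup_iff'.mp hU

lemma star_mem_unit (hU : U ∈ Matrix.unitaryGroup (Fin n) ℂ) :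
    Uᴴ ∈ Matrix.unitaryGroup (Fin n) ℂ := by
  rw [← Matrix.star_eq_conjTranspose]; exact Unitary.star_mem hU

lemma unit_det (hU : U ∈ Matrix.unitaryGroup (Fin n) ℂ) : IsUnit U.det := by
  have h := congrArg Matrix.det (unit_mul hU)
  rw [Matrix.det_mul, Matrix.det_one] at h
  exact isUnit_iff_exists_inv.mpr ⟨_, h⟩

lemma unit_det' (hU : U ∈ Matrix.unitaryGroup (Fin n) ℂ) : IsUnit Uᴴ.det := by
  have h := congrArg Matrix.det (unit_mul hU)
  rw [Matrix.det_mul, Matrix.det_one] at h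
  exact isUnit_iff_exists_inv.mpr ⟨_, (mul_comm _ _).trans h⟩

lemma trace_conj (hU : U ∈ Matrix.unitaryGroup (Fin n) ℂ) (A : Mat n) :
    (U * A * Uᴴ).trace = A.trace := by
  rw [Matrix.trace_mul_comm (U * A) Uᴴ, ← Matrix.mul_assoc, unit_mul' hU, Matrix.one_mul]

lemma conj_cancel (hW : W ∈ Matrix.unitaryGroup (Fin n) ℂ) (A : Mat n) :
    Wᴴ * (W * A * Wᴴ) * W = A := by
  simp only [Matrix.mul_assoc]
  rw [← Matrix.mul_assoc Wᴴ W, unit_mul' hW, Matrix.one_mul, Matrix.mul_one]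

lemma hip_sub (A B C : Mat n) : hip A (B - C) = hip A B - hip A C := by
  simp [hip, Matrix.mul_sub, Matrix.trace_sub, Complex.sub_re]

lemma hip_conj_diag (hU : U ∈ Matrix.unitaryGroup (Fin n) ℂ) (a b : Fin n → ℝ) :
    hip (U * Matrix.diagonal (fun i => (a i : ℂ)) * Uᴴ)
      (U * Matrix.diagonal (fun i => (b i : ℂ)) * Uᴴ) = ∑ i, a i * b i := by
  have h : (U * Matrix.diagonal (fun i => (a i : ℂ)) * Uᴴ)
      * (U * Matrix.diagonal (fun i => (b i : ℂ)) * Uᴴ)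
      = U * (Matrix.diagonal (fun i => (a i : ℂ)) * Matrix.diagonal (fun i => (b i : ℂ))) * Uᴴ := by
    simp only [Matrix.mul_assoc]
    rw [← Matrix.mul_assoc Uᴴ U, unit_mul' hU, Matrix.one_mul]
  rw [hip, h, trace_conj hU, Matrix.diagonal_mul_diagonal, Matrix.trace_diagonal]
  simp

lemma hip_conj_apply (hU : U ∈ Matrix.unitaryGroup (Fin n) ℂ) (d : Fin n → ℝ) (τ : Mat n) :
    hip (U * Matrix.diagonal (fun i => (d i : ℂ)) * Uᴴ) τ
      = ∑ i, d i * ((Uᴴ * τ * U) i i).re := by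
  have h : (U * Matrix.diagonal (fun i => (d i : ℂ)) * Uᴴ) * τ
      = U * (Matrix.diagonal (fun i => (d i : ℂ)) * (Uᴴ * τ * U)) * Uᴴ := by
    simp only [Matrix.mul_assoc]
    rw [unit_mul hU, Matrix.mul_one]
  rw [hip, h, trace_conj hU, Matrix.trace]
  rw [Complex.re_sum]
  congr 1; funext i
  simp [Matrix.diag, Matrix.diagonal_mul, Complex.re_ofReal_mul]

lemma eigs_herm {ρ : Mat n} (h : ρ.IsHermitian) :
    ∃ π : Equiv.Perm (Fin n), eigs ρ = h.eigenvalues ∘ π := by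
  refine ⟨Fin.revPerm.trans (Tuple.sort h.eigenvalues), ?_⟩
  funext i
  simp [eigs, dif_pos h]

lemma spec_thm {ρ : Mat n} (h : ρ.IsHermitian) :
    ρ = (h.eigenvectorUnitary : Mat n) * Matrix.diagonal (fun i => (h.eigenvalues i : ℂ))
      * (h.eigenvectorUnitary : Mat n)ᴴ := by
  conv_lhs => rw [h.spectral_theorem]
  rw [Unitary.conjStarAlgAut_apply, Matrix.star_eq_conjTranspose]
  rfl

lemma perm_of_unitary_conj_diag {v e : Fin n → ℝ}
    (hQ : Q ∈ Matrix.unitaryGroup (Fin n) ℂ)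
    (h : Q * Matrix.diagonal (fun i => (v i : ℂ)) * Qᴴ = Matrix.diagonal (fun i => (e i : ℂ))) :
    ∃ σ : Equiv.Perm (Fin n), v ∘ σ = e := by
  classical
  have key : ∀ t : ℝ, Fintype.card {i // e i = t} = Fintype.card {i // v i = t} := by
    intro t
    have h2 : Q * Matrix.diagonal (fun i => ((v i : ℂ) - t)) * Qᴴ
        = Matrix.diagonal (fun i => ((e i : ℂ) - t)) := by
      have hd : ∀ w : Fin n → ℝ, Matrix.diagonal (fun i => ((w i : ℂ) - t))
          = Matrix.diagonal (fun i => (w i : ℂ)) - (t : ℂ) • 1 := by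
        intro w
        rw [Matrix.smul_one_eq_diagonal, ← Matrix.diagonal_sub]
      rw [hd, hd, Matrix.mul_sub, Matrix.sub_mul, h]
      congr 1
      rw [Matrix.mul_smul, Matrix.smul_mul, Matrix.mul_one, unit_mul hQ]
    have hr := congrArg Matrix.rank h2
    rw [Matrix.rank_mul_eq_left_of_isUnit_det Qᴴ _ (unit_det' hQ),
      Matrix.rank_mul_eq_right_of_isUnit_det Q _ (unit_det hQ),
      Matrix.rank_diagonal, Matrix.rank_diagonal] at hr
    have hv : ∀ (w : Fin n → ℝ), Fintype.card {i // ¬ ((w i : ℂ) - t ≠ 0)}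
        = Fintype.card {i // w i = t} := by
      intro w
      refine Fintype.card_congr (Equiv.subtypeEquivRight fun i => ?_)
      simp [sub_eq_zero, Complex.ofReal_inj]
    have hcv := Fintype.card_subtype_compl (p := fun i => ((v i : ℂ) - t ≠ 0))
    have hce := Fintype.card_subtype_compl (p := fun i => ((e i : ℂ) - t ≠ 0))
    rw [hv v] at hcv
    rw [hv e] at hce
    have l1 : Fintype.card {i // ((v i : ℂ) - t ≠ 0)} ≤ Fintype.card (Fin n) :=
      Fintype.card_subtype_le _
    have l2 : Fintype.card {i // ((e i : ℂ) - t ≠ 0)} ≤ Fintype.card (Fin n) :=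
      Fintype.card_subtype_le _
    omega
  exact ⟨Equiv.ofFiberEquiv (fun t => Fintype.equivOfCardEq (key t)),
    funext fun i => Equiv.ofFiberEquiv_map (fun t => Fintype.equivOfCardEq (key t)) i⟩

/-- The sorted eigenvalues of a conjugated real diagonal matrix are a permutation of the
diagonal entries. -/
lemma eigs_conj_diag (hU : U ∈ Matrix.unitaryGroup (Fin n) ℂ) (v : Fin n → ℝ) :
    ∃ σ : Equiv.Perm (Fin n),
      eigs (U * Matrix.diagonal (fun i => (v i : ℂ)) * Uᴴ) = v ∘ σ := by
  have hherm : (U * Matrix.diagonal (fun i => (v i : ℂ)) * Uᴴ).IsHermitian :=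
    herm_conj (herm_diag v)
  have hW : (hherm.eigenvectorUnitary : Mat n) ∈ Matrix.unitaryGroup (Fin n) ℂ :=
    hherm.eigenvectorUnitary.2
  have hQmem : (hherm.eigenvectorUnitary : Mat n)ᴴ * U ∈ Matrix.unitaryGroup (Fin n) ℂ :=
    mul_mem (star_mem_unit hW) hU
  have heq : ((hherm.eigenvectorUnitary : Mat n)ᴴ * U) * Matrix.diagonal (fun i => (v i : ℂ))
      * ((hherm.eigenvectorUnitary : Mat n)ᴴ * U)ᴴ
      = Matrix.diagonal (fun i => (hherm.eigenvalues i : ℂ)) := by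
    have hs := congrArg (fun X => (hherm.eigenvectorUnitary : Mat n)ᴴ * X
      * (hherm.eigenvectorUnitary : Mat n)) (spec_thm hherm)
    rw [conj_cancel hW] at hs
    rw [← hs]
    simp only [Matrix.conjTranspose_mul, Matrix.conjTranspose_conjTranspose, Matrix.mul_assoc]
  obtain ⟨σ₁, hσ₁⟩ := perm_of_unitary_conj_diag hQmem heq
  obtain ⟨π, hπ⟩ := eigs_herm hherm
  refine ⟨π.trans σ₁, ?_⟩
  funext i
  have := congrFun hσ₁ (π i)
  simp only [Function.comp_apply] at this ⊢
  rw [hπ]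
  simp only [Function.comp_apply, Equiv.trans_apply]
  rw [← this]

lemma trace_eq_sum_eigenvalues {ρ : Mat n} (h : ρ.IsHermitian) :
    ρ.trace = ∑ i, (h.eigenvalues i : ℂ) := by
  conv_lhs => rw [spec_thm h]
  rw [trace_conj h.eigenvectorUnitary.2, Matrix.trace_diagonal]

lemma eigenvalues_mem_simplex {τ : Mat n} (hτ : τ ∈ Dens n) :
    hτ.1.1.eigenvalues ∈ stdSimplex ℝ (Fin n) := by
  refine ⟨fun i => hτ.1.eigenvalues_nonneg i, ?_⟩
  have h : (∑ i, (hτ.1.1.eigenvalues i : ℂ)) = 1 :=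
    (trace_eq_sum_eigenvalues hτ.1.1).symm.trans hτ.2
  have h2 : ((∑ i, hτ.1.1.eigenvalues i : ℝ) : ℂ) = 1 := by
    push_cast
    exact h
  exact_mod_cast h2

lemma diag_re_nonneg {B : Mat n} (hB : B.PosSemidef) (i : Fin n) : 0 ≤ (B i i).re := by
  exact (Complex.le_def.mp (hB.diag_nonneg (i := i))).1

lemma unitary_normSq_doublyStochastic (hQ : Q ∈ Matrix.unitaryGroup (Fin n) ℂ) :
    Matrix.of (fun i j => Complex.normSq (Q i j)) ∈ doublyStochastic ℝ (Fin n) := by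
  rw [mem_doublyStochastic_iff_sum]
  refine ⟨fun i j => Complex.normSq_nonneg _, fun i => ?_, fun j => ?_⟩
  · have h := congrFun (congrFun (unit_mul hQ) i) i
    rw [Matrix.mul_apply] at h
    simp only [Matrix.one_apply_eq] at h
    have h1 : ∑ j, ((Complex.normSq (Q i j) : ℂ)) = 1 := by
      rw [← h]
      refine Finset.sum_congr rfl fun j _ => ?_
      rw [Matrix.conjTranspose_apply, ← Complex.mul_conj]
      rfl
    have h2 := congrArg Complex.re h1
    simpa [Complex.re_sum] using h2
  · have h := congrFun (congrFun (unit_mul' hQ) j) j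
    rw [Matrix.mul_apply] at h
    simp only [Matrix.one_apply_eq] at h
    have h1 : ∑ i, ((Complex.normSq (Q i j) : ℂ)) = 1 := by
      rw [← h]
      refine Finset.sum_congr rfl fun i _ => ?_
      rw [Matrix.conjTranspose_apply, Complex.normSq_eq_conj_mul_self]
      rfl
    have h2 := congrArg Complex.re h1
    simpa [Complex.re_sum] using h2

lemma diag_conj_diag_re (hQ : Q ∈ Matrix.unitaryGroup (Fin n) ℂ) (μ : Fin n → ℝ) (i : Fin n) :
    ((Q * Matrix.diagonal (fun j => (μ j : ℂ)) * Qᴴ) i i).re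
      = ∑ j, Complex.normSq (Q i j) * μ j := by
  rw [Matrix.mul_apply]
  rw [Complex.re_sum]
  refine Finset.sum_congr rfl fun j _ => ?_
  rw [Matrix.mul_diagonal, Matrix.conjTranspose_apply]
  have h : Q i j * (μ j : ℂ) * star (Q i j) = ((Complex.normSq (Q i j) * μ j : ℝ) : ℂ) := by
    push_cast
    rw [mul_comm (Q i j), mul_assoc, ← Complex.mul_conj]
    ring_nf
    rfl
  rw [h, Complex.ofReal_re]

lemma simplex_comp_perm {p : Fin n → ℝ} (hp : p ∈ stdSimplex ℝ (Fin n))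
    (σ : Equiv.Perm (Fin n)) : p ∘ σ ∈ stdSimplex ℝ (Fin n) := by
  refine ⟨fun i => hp.1 _, ?_⟩
  rw [show ∑ i, (p ∘ σ) i = ∑ i, p (σ i) from rfl, Equiv.sum_comp σ p]
  exact hp.2

/-- Schur–Birkhoff: a permutation-invariant convex function of the diagonal (in any unitary
basis) of a density matrix is at most its value at the eigenvalues. -/
lemma f_diag_le (f : (Fin n → ℝ) → ℝ)
    (hperm : ∀ (π : Equiv.Perm (Fin n)) (p : Fin n → ℝ), f (p ∘ π) = f p)
    (hconv : ConvexOn ℝ (stdSimplex ℝ (Fin n)) f)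
    {τ : Mat n} (hτ : τ ∈ Dens n) (hU : U ∈ Matrix.unitaryGroup (Fin n) ℂ) :
    f (fun i => ((Uᴴ * τ * U) i i).re) ≤ f (eigs τ) := by
  classical
  have hherm : τ.IsHermitian := hτ.1.1
  have hμ : hherm.eigenvalues ∈ stdSimplex ℝ (Fin n) := eigenvalues_mem_simplex hτ
  have hW : (hherm.eigenvectorUnitary : Mat n) ∈ Matrix.unitaryGroup (Fin n) ℂ :=
    hherm.eigenvectorUnitary.2
  have hQmem : Uᴴ * (hherm.eigenvectorUnitary : Mat n) ∈ Matrix.unitaryGroup (Fin n) ℂ :=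
    mul_mem (star_mem_unit hU) hW
  have hBq : (fun i => ((Uᴴ * τ * U) i i).re)
      = fun i => ∑ j, Complex.normSq ((Uᴴ * (hherm.eigenvectorUnitary : Mat n)) i j)
          * hherm.eigenvalues j := by
    have hconjeq : Uᴴ * τ * U = (Uᴴ * (hherm.eigenvectorUnitary : Mat n))
        * Matrix.diagonal (fun j => (hherm.eigenvalues j : ℂ))
        * (Uᴴ * (hherm.eigenvectorUnitary : Mat n))ᴴ := by
      conv_lhs => rw [spec_thm hherm]
      simp only [Matrix.conjTranspose_mul, Matrix.conjTranspose_conjTranspose, Matrix.mul_assoc]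
    funext i
    rw [hconjeq, diag_conj_diag_re hQmem]
  obtain ⟨w, hw0, hw1, hwM⟩ := exists_eq_sum_perm_of_mem_doublyStochastic
    (unitary_normSq_doublyStochastic hQmem)
  have hq : (fun i => ((Uᴴ * τ * U) i i).re)
      = ∑ σ : Equiv.Perm (Fin n), w σ • (hherm.eigenvalues ∘ σ) := by
    rw [hBq]
    funext i
    have hM : ∀ j, Complex.normSq ((Uᴴ * (hherm.eigenvectorUnitary : Mat n)) i j)
        = ∑ σ : Equiv.Perm (Fin n), w σ * (σ.permMatrix ℝ) i j := by
      intro j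
      have := congrFun (congrFun (congrArg (fun M => M) hwM) i) j
      simp only [Finset.sum_apply, Matrix.sum_apply, Matrix.smul_apply, smul_eq_mul,
        Matrix.of_apply] at this ⊢
      exact this.symm
    simp only [Finset.sum_apply, Pi.smul_apply, Function.comp_apply, smul_eq_mul]
    calc ∑ j, Complex.normSq ((Uᴴ * (hherm.eigenvectorUnitary : Mat n)) i j)
          * hherm.eigenvalues j
        = ∑ j, ∑ σ : Equiv.Perm (Fin n), w σ * (σ.permMatrix ℝ) i j * hherm.eigenvalues j := by
          refine Finset.sum_congr rfl fun j _ => ?_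
          rw [hM j, Finset.sum_mul]
      _ = ∑ σ : Equiv.Perm (Fin n), ∑ j, w σ * (σ.permMatrix ℝ) i j * hherm.eigenvalues j :=
          Finset.sum_comm
      _ = ∑ σ : Equiv.Perm (Fin n), w σ * hherm.eigenvalues (σ i) := by
          refine Finset.sum_congr rfl fun σ _ => ?_
          simp only [mul_assoc]
          rw [← Finset.mul_sum]
          congr 1
          simp [Equiv.Perm.permMatrix, PEquiv.toMatrix_apply, Equiv.toPEquiv_apply]
  rw [hq]
  have hle := hconv.map_sum_le (t := Finset.univ) (w := w)
    (p := fun σ : Equiv.Perm (Fin n) => hherm.eigenvalues ∘ σ)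
    (fun σ _ => hw0 σ) hw1 (fun σ _ => simplex_comp_perm hμ σ)
  refine hle.trans (le_of_eq ?_)
  simp only [smul_eq_mul]
  have heach : ∀ σ : Equiv.Perm (Fin n), f (hherm.eigenvalues ∘ σ) = f hherm.eigenvalues :=
    fun σ => hperm σ _
  obtain ⟨π, hπ⟩ := eigs_herm hherm
  calc ∑ σ : Equiv.Perm (Fin n), w σ * f (hherm.eigenvalues ∘ σ)
      = ∑ σ : Equiv.Perm (Fin n), w σ * f hherm.eigenvalues := by
        exact Finset.sum_congr rfl fun σ _ => by rw [heach σ]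
    _ = f hherm.eigenvalues := by rw [← Finset.sum_mul, hw1, one_mul]
    _ = f (eigs τ) := by rw [hπ, hperm π]

end SpectralSubgrad

end SpectralSubgradHelpers

/-- subgradients of a permutation-invariant convex function on the
simplex correspond exactly to subgradients of its spectral lift. -/
theorem spectral_subgradients {n : ℕ} (f : (Fin n → ℝ) → ℝ)
    (hperm : ∀ (π : Equiv.Perm (Fin n)) (p : Fin n → ℝ), f (p ∘ π) = f p)
    (hconv : ConvexOn ℝ (stdSimplex ℝ (Fin n)) f)
    (lam : Fin n → ℝ) (hlam : lam ∈ stdSimplex ℝ (Fin n))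
    (d : Fin n → ℝ) (U : Mat n) (hU : U ∈ Matrix.unitaryGroup (Fin n) ℂ) :
    IsCSubgrad (stdSimplex ℝ (Fin n)) f lam d ↔
      IsQSubgrad (fun ρ => f (eigs ρ))
        (U * Matrix.diagonal (fun i => (lam i : ℂ)) * Uᴴ)
        (U * Matrix.diagonal (fun i => (d i : ℂ)) * Uᴴ) := by
  classical
  open SpectralSubgrad in
  constructor
  · intro hC τ hτ
    dsimp only
    obtain ⟨σ, hσ⟩ := eigs_conj_diag hU lam
    have h1 : f (eigs (U * Matrix.diagonal (fun i => (lam i : ℂ)) * Uᴴ)) = f lam := by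
      rw [hσ, hperm σ lam]
    set q : Fin n → ℝ := fun i => ((Uᴴ * τ * U) i i).re with hqdef
    have hBpsd : (Uᴴ * τ * U).PosSemidef := by
      have := hτ.1.conjTranspose_mul_mul_same U
      simpa [Matrix.conjTranspose_conjTranspose] using this
    have hq_nonneg : ∀ i, 0 ≤ q i := fun i => diag_re_nonneg hBpsd i
    have hq_sum : ∑ i, q i = 1 := by
      have ht : (Uᴴ * τ * U).trace = 1 := by
        have h := trace_conj (star_mem_unit hU) τ
        rw [Matrix.conjTranspose_conjTranspose] at h
        rw [h, hτ.2]
      have : ((Uᴴ * τ * U).trace).re = 1 := by rw [ht]; rfl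
      rw [Matrix.trace, Complex.re_sum] at this
      exact this
    have hqs : q ∈ stdSimplex ℝ (Fin n) := ⟨hq_nonneg, hq_sum⟩
    have h2 : hip (U * Matrix.diagonal (fun i => (d i : ℂ)) * Uᴴ) τ = ∑ i, d i * q i :=
      hip_conj_apply hU d τ
    have h3 : hip (U * Matrix.diagonal (fun i => (d i : ℂ)) * Uᴴ)
        (U * Matrix.diagonal (fun i => (lam i : ℂ)) * Uᴴ) = ∑ i, d i * lam i :=
      hip_conj_diag hU d lam
    have h4 := hC q hqs
    have h5 : f q ≤ f (eigs τ) := f_diag_le f hperm hconv hτ hU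
    rw [hip_sub, h1, h2, h3]
    have h6 : ∑ y, d y * (q y - lam y) = ∑ i, d i * q i - ∑ i, d i * lam i := by
      rw [← Finset.sum_sub_distrib]
      exact Finset.sum_congr rfl fun y _ => by ring
    rw [h6] at h4
    linarith
  · intro hQ p hp
    have hτ : U * Matrix.diagonal (fun i => (p i : ℂ)) * Uᴴ ∈ Dens n := by
      constructor
      · exact (Matrix.posSemidef_diagonal_iff.mpr fun i =>
          Complex.zero_le_real.mpr (hp.1 i)).mul_mul_conjTranspose_same U
      · rw [trace_conj hU, Matrix.trace_diagonal]
        have : ((∑ i, p i : ℝ) : ℂ) = 1 := by rw [hp.2]; norm_num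
        rw [← this]
        push_cast
        rfl
    have h := hQ _ hτ
    dsimp only at h
    obtain ⟨σ, hσ⟩ := eigs_conj_diag hU lam
    obtain ⟨σ', hσ'⟩ := eigs_conj_diag hU p
    rw [hσ, hperm σ lam, hσ', hperm σ' p, hip_sub, hip_conj_diag hU d p,
      hip_conj_diag hU d lam] at h
    have h6 : ∑ y, d y * (p y - lam y) = ∑ i, d i * p i - ∑ i, d i * lam i := by
      rw [← Finset.sum_sub_distrib]
      exact Finset.sum_congr rfl fun y _ => by ring
    rw [h6]
    linarith
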